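/- arXiv:hep-th/0107033 — 5 statements merged into one kernel-verified Lean document; each statement's English description precedes it below -/
import Mathlib

section
/- For every natural number r, real numbers v_0, v_1, ..., v_r, and integers A, B with 0 ≤ B < A ≤ r, the sum ∑_{i=B}^{A} ( ∏_{α=0}^{i-1} (v_A − v_α) ) · ( ∏_{β=i+1}^{r} (v_B − v_β) ) equals 0. -/
private lemma telesc (f : ℕ → ℝ) (B A : ℕ) (h : B ≤ A) :
    ∑ i ∈ Finset.Icc B A, (f (i + 1) - f i) = f (A + 1) - f B := by
  induction A with
  | zero => interval_cases B; simp
  | succ n ih =>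
    rcases Nat.lt_or_ge B (n + 1) with hb | hb
    · rw [Finset.sum_Icc_succ_top (by omega), ih (by omega)]; ring
    · have hB : B = n + 1 := by omega
      subst hB; simp

/-- For every natural number `r`, real numbers `v 0, …, v r`, and natural numbers
`A, B` with `0 ≤ B < A ≤ r`, the sum
`∑_{i=B}^{A} (∏_{α=0}^{i-1} (v A − v α)) · (∏_{β=i+1}^{r} (v B − v β))` equals `0`. -/
theorem stmt0 (r : ℕ) (v : ℕ → ℝ) (A B : ℕ) (hBA : B < A) (hAr : A ≤ r) :
    ∑ i ∈ Finset.Icc B A,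
      (∏ α ∈ Finset.range i, (v A - v α)) * (∏ β ∈ Finset.Icc (i + 1) r, (v B - v β)) = 0 := by
  by_cases h : v A = v B
  · refine Finset.sum_eq_zero fun i hi => ?_
    rw [Finset.mem_Icc] at hi
    rcases eq_or_lt_of_le hi.1 with rfl | hlt
    · refine mul_eq_zero_of_right _ (Finset.prod_eq_zero (i := A) ?_ ?_)
      · rw [Finset.mem_Icc]; omega
      · rw [h]; ring
    · refine mul_eq_zero_of_left (Finset.prod_eq_zero (i := B) (Finset.mem_range.mpr hlt) ?_) _
      rw [h]; ring
  · set F : ℕ → ℝ := fun i =>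
      (∏ α ∈ Finset.range i, (v A - v α)) * ∏ β ∈ Finset.Icc i r, (v B - v β) with hF
    have key : ∀ i ∈ Finset.Icc B A,
        (v A - v B) * ((∏ α ∈ Finset.range i, (v A - v α)) *
          (∏ β ∈ Finset.Icc (i + 1) r, (v B - v β))) = F (i + 1) - F i := by
      intro i hi
      rw [Finset.mem_Icc] at hi
      have hIcc : Finset.Icc i r = insert i (Finset.Icc (i + 1) r) := by
        ext x; simp only [Finset.mem_Icc, Finset.mem_insert]; omega
      have h1 : ∏ β ∈ Finset.Icc i r, (v B - v β)
          = (v B - v i) * ∏ β ∈ Finset.Icc (i + 1) r, (v B - v β) := by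
        rw [hIcc, Finset.prod_insert (by simp)]
      simp only [hF]
      rw [h1, Finset.prod_range_succ]
      ring
    have hsum : (v A - v B) * (∑ i ∈ Finset.Icc B A,
        (∏ α ∈ Finset.range i, (v A - v α)) * (∏ β ∈ Finset.Icc (i + 1) r, (v B - v β)))
        = F (A + 1) - F B := by
      rw [Finset.mul_sum, Finset.sum_congr rfl key, telesc F B A hBA.le]
    have hFB : F B = 0 := by
      refine mul_eq_zero_of_right _ (Finset.prod_eq_zero (i := B) ?_ (by ring))
      rw [Finset.mem_Icc]; omega
    have hFA : F (A + 1) = 0 := by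
      refine mul_eq_zero_of_left (Finset.prod_eq_zero (i := A) ?_ (by ring)) _
      rw [Finset.mem_range]; omega
    rw [hFA, hFB, sub_zero] at hsum
    exact (mul_eq_zero.mp hsum).resolve_left (sub_ne_zero.mpr h)
end

section
/- For every integer n ≥ 1 and real numbers v_0, v_1, ..., v_n, the quantity $_n := ∑_{k=0}^{n} ( ∏_{i=0}^{k-1} (v_n − v_i) ) · ( ∏_{j=k+1}^{n} (v_0 − v_j) ) equals 0. -/
/-- For every `n ≥ 1` and real numbers `v 0, …, v n`, the quantity
`$_n = ∑_{k=0}^{n} (∏_{i=0}^{k-1} (v n − v i)) · (∏_{j=k+1}^{n} (v 0 − v j))` equals `0`. -/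
theorem stmt1 (n : ℕ) (hn : 1 ≤ n) (v : ℕ → ℝ) :
    ∑ k ∈ Finset.range (n + 1),
      (∏ i ∈ Finset.range k, (v n - v i)) * (∏ j ∈ Finset.Icc (k + 1) n, (v 0 - v j)) = 0 := by
  by_cases h : v n = v 0
  · apply Finset.sum_eq_zero
    intro k hk
    rcases Nat.eq_zero_or_pos k with hk0 | hk1
    · subst hk0
      apply mul_eq_zero_of_right
      apply Finset.prod_eq_zero (i := n)
      · simp [Finset.mem_Icc, hn]
      · rw [← h]; ring
    · apply mul_eq_zero_of_left
      apply Finset.prod_eq_zero (i := 0)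
      · simpa using hk1
      · rw [h]; ring
  · have hne : v n - v 0 ≠ 0 := sub_ne_zero.mpr h
    set e : ℕ → ℝ := fun k =>
      (∏ i ∈ Finset.range k, (v n - v i)) * (∏ j ∈ Finset.Icc k n, (v 0 - v j)) with he
    have key : ∀ k ∈ Finset.range (n + 1),
        ((∏ i ∈ Finset.range k, (v n - v i)) *
          (∏ j ∈ Finset.Icc (k + 1) n, (v 0 - v j))) * (v n - v 0)
        = e (k + 1) - e k := by
      intro k hk
      have hkn : k ≤ n := Nat.lt_succ_iff.mp (Finset.mem_range.mp hk)
      have h1 : Finset.Icc k n = insert k (Finset.Icc (k + 1) n) := by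
        ext x
        simp only [Finset.mem_Icc, Finset.mem_insert]
        omega
      have h2 : ∏ j ∈ Finset.Icc k n, (v 0 - v j)
          = (v 0 - v k) * ∏ j ∈ Finset.Icc (k + 1) n, (v 0 - v j) := by
        rw [h1, Finset.prod_insert (by simp)]
      simp only [he, Finset.prod_range_succ, h2]
      ring
    have tele : ∑ k ∈ Finset.range (n + 1),
        (((∏ i ∈ Finset.range k, (v n - v i)) *
          (∏ j ∈ Finset.Icc (k + 1) n, (v 0 - v j))) * (v n - v 0))
        = e (n + 1) - e 0 := by
      rw [Finset.sum_congr rfl key, Finset.sum_range_sub]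
    have hend : e (n + 1) = 0 := by
      apply mul_eq_zero_of_left
      apply Finset.prod_eq_zero (i := n) (by simp)
      ring
    have hstart : e 0 = 0 := by
      apply mul_eq_zero_of_right
      apply Finset.prod_eq_zero (i := 0) (by simp)
      ring
    rw [← Finset.sum_mul] at tele
    rw [hend, hstart, sub_zero] at tele
    exact (mul_eq_zero.mp tele).resolve_right hne
end

section
/- Let R be an associative unital algebra over ℝ, let p_1, ..., p_N ∈ R be pairwise orthogonal nonzero idempotents, let λ_1, ..., λ_N ∈ ℝ, and set φ = ∑_{i=1}^{N} λ_i p_i. Fix real numbers v_1, ..., v_m and a nonzero real number b. Then b · φ · (φ − v_1·1) · ... · (φ − v_m·1) = 0 if and only if for every i one has λ_i ∈ {0, v_1, ..., v_m}. That is, the solutions of the field equation among such linear combinations of orthogonal projections are exactly the GMS solitons whose coefficients are roots of b x(x − v_1)···(x − v_m). -/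
/-- Let `p 1, …, p N` be pairwise orthogonal nonzero idempotents in an associative unital
ℝ-algebra, `φ = ∑ i, λ i • p i`, `v 1, …, v m` reals and `b ≠ 0`. Then
`b • (φ·(φ − v 1·1)·⋯·(φ − v m·1)) = 0` iff every coefficient `λ i` lies in
`{0, v 1, …, v m}`. -/
theorem stmt7 (R : Type*) [Ring R] [Algebra ℝ R] (N : ℕ) (p : Fin N → R)
    (horth : ∀ i j, i ≠ j → p i * p j = 0)
    (hidem : ∀ i, p i * p i = p i)
    (hne : ∀ i, p i ≠ 0)
    (lam : Fin N → ℝ) (φ : R) (hφ : φ = ∑ i, lam i • p i)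
    (m : ℕ) (v : Fin m → ℝ) (b : ℝ) (hb : b ≠ 0) :
    b • (φ * (List.ofFn (fun j : Fin m => φ - algebraMap ℝ R (v j))).prod) = 0 ↔
      ∀ i, lam i = 0 ∨ ∃ j, lam i = v j := by
  -- p i * φ = lam i • p i
  have hpφ : ∀ i, p i * φ = lam i • p i := by
    intro i
    rw [hφ, Finset.mul_sum]
    rw [Finset.sum_eq_single i]
    · rw [mul_smul_comm, hidem]
    · intro k _ hk
      rw [mul_smul_comm, horth i k (Ne.symm hk), smul_zero]
    · simp
  have key : ∀ (i : Fin N) (L : List ℝ),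
      p i * (L.map (fun t => φ - algebraMap ℝ R t)).prod
        = (L.map (fun t => lam i - t)).prod • p i := by
    intro i L
    induction L with
    | nil => simp
    | cons t L ih =>
      have h1 : p i * (φ - algebraMap ℝ R t) = (lam i - t) • p i := by
        rw [mul_sub, hpφ, Algebra.algebraMap_eq_smul_one, mul_smul_comm, mul_one,
          ← sub_smul]
      simp only [List.map_cons, List.prod_cons]
      rw [← mul_assoc, h1, smul_mul_assoc, ih, smul_smul]
  set c : Fin N → ℝ := fun i => lam i * ∏ j, (lam i - v j) with hc
  have hkey : ∀ i, p i * (List.ofFn (fun j : Fin m => φ - algebraMap ℝ R (v j))).prod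
      = (∏ j, (lam i - v j)) • p i := by
    intro i
    have h2 : List.ofFn (fun j : Fin m => φ - algebraMap ℝ R (v j))
        = (List.ofFn v).map (fun t => φ - algebraMap ℝ R t) := by
      rw [List.map_ofFn]; rfl
    rw [h2, key i, List.map_ofFn, List.prod_ofFn]; rfl
  have hP : b • (φ * (List.ofFn (fun j : Fin m => φ - algebraMap ℝ R (v j))).prod)
      = ∑ i, (b * c i) • p i := by
    nth_rewrite 1 [hφ]
    rw [Finset.sum_mul, Finset.smul_sum]
    refine Finset.sum_congr rfl fun i _ => ?_
    rw [smul_mul_assoc, hkey i, smul_smul, smul_smul, hc]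
    ring_nf
  rw [hP]
  constructor
  · intro h i
    have hi : (b * c i) • p i = 0 := by
      have := congrArg (· * p i) h
      simp only [Finset.sum_mul, zero_mul] at this
      rw [Finset.sum_eq_single i] at this
      · rwa [smul_mul_assoc, hidem] at this
      · intro k _ hk
        rw [smul_mul_assoc, horth k i hk, smul_zero]
      · simp
    have hc0 : c i = 0 := by
      by_contra hne'
      have hbc : b * c i ≠ 0 := mul_ne_zero hb hne'
      apply hne i
      have h2 : ((b * c i)⁻¹ * (b * c i)) • p i = (b * c i)⁻¹ • (0 : R) := by
        rw [mul_smul, hi]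
      rwa [inv_mul_cancel₀ hbc, one_smul, smul_zero] at h2
    rcases mul_eq_zero.1 hc0 with h0 | hprod
    · exact Or.inl h0
    · right
      obtain ⟨j, _, hj⟩ := Finset.prod_eq_zero_iff.1 hprod
      exact ⟨j, by linarith [sub_eq_zero.1 hj]⟩
  · intro h
    refine Finset.sum_eq_zero fun i _ => ?_
    have hc0 : c i = 0 := by
      rcases h i with h0 | ⟨j, hj⟩
      · simp [hc, h0]
      · exact mul_eq_zero_of_right _
          (Finset.prod_eq_zero (Finset.mem_univ j) (by rw [hj, sub_self]))
    rw [hc0, mul_zero, zero_smul]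
end

section
/- Let R be an associative unital algebra over ℝ, let q_0, q_1, ..., q_m ∈ R be pairwise orthogonal idempotents with q_0 + q_1 + ... + q_m = 1, let v_0, v_1, ..., v_m be arbitrary real numbers, and set φ = ∑_{A=0}^{m} v_A q_A. Then for every element ψ ∈ R, ∑_{k=0}^{m} ( ∏_{i=0}^{k-1} (φ − v_i·1) ) · ψ · ( ∏_{j=k+1}^{m} (φ − v_j·1) ) = ∑_{A=0}^{m} ζ_A · q_A ψ q_A, where ζ_A = ∏_{i ≠ A} (v_A − v_i). In other words, all cross terms q_A ψ q_B with A ≠ B cancel, and the linearization (Hessian) of the field equation at the GMS soliton φ is block-diagonal with eigenvalue ζ_A on the block q_A ψ q_A. -/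
private lemma range_erase_eq (m A : ℕ) (hA : A ≤ m) :
    (Finset.range (m+1)).erase A = Finset.range A ∪ Finset.Ico (A+1) (m+1) := by
  ext x
  simp only [Finset.mem_erase, Finset.mem_range, Finset.mem_union, Finset.mem_Ico]
  omega

private lemma scalar_key (m : ℕ) (v : ℕ → ℝ) (A B : ℕ) (hA : A ≤ m) (hB : B ≤ m) :
    ∑ k ∈ Finset.range (m+1),
      (∏ i ∈ Finset.range k, (v A - v i)) * (∏ j ∈ Finset.Ico (k+1) (m+1), (v B - v j))
    = if A = B then ∏ i ∈ (Finset.range (m+1)).erase A, (v A - v i) else 0 := by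
  by_cases hAB : A = B
  · subst hAB
    rw [if_pos rfl, range_erase_eq m A hA,
      Finset.prod_union (by
        simp only [Finset.disjoint_left, Finset.mem_range, Finset.mem_Ico]
        omega)]
    rw [Finset.sum_eq_single A]
    · intro k hk hkA
      rcases lt_or_gt_of_ne hkA with h | h
      · refine mul_eq_zero_of_right _ (Finset.prod_eq_zero (i := A) ?_ (by ring))
        simp only [Finset.mem_Ico]; omega
      · exact mul_eq_zero_of_left (Finset.prod_eq_zero (Finset.mem_range.mpr h) (by ring)) _
    · intro h
      exact absurd (Finset.mem_range.mpr (by omega)) h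
  · rw [if_neg hAB]
    by_cases hv : v A = v B
    · refine Finset.sum_eq_zero fun k hk => ?_
      rw [Finset.mem_range] at hk
      rcases Nat.lt_or_ge k A with h | h
      · refine mul_eq_zero_of_right _ (Finset.prod_eq_zero (i := A) ?_ (by rw [hv]; ring))
        simp only [Finset.mem_Ico]; omega
      rcases Nat.lt_or_ge k B with h2 | h2
      · refine mul_eq_zero_of_right _ (Finset.prod_eq_zero (i := B) ?_ (by ring))
        simp only [Finset.mem_Ico]; omega
      rcases Nat.lt_or_ge A k with h3 | h3
      · exact mul_eq_zero_of_left (Finset.prod_eq_zero (Finset.mem_range.mpr h3) (by ring)) _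
      · have hBk : B < k := by omega
        exact mul_eq_zero_of_left
          (Finset.prod_eq_zero (Finset.mem_range.mpr hBk) (by rw [hv]; ring)) _
    · set F : ℕ → ℝ := fun k =>
        (∏ i ∈ Finset.range k, (v A - v i)) * ∏ j ∈ Finset.Ico k (m+1), (v B - v j) with hF
      have tel : ∑ k ∈ Finset.range (m+1), (F (k+1) - F k) = F (m+1) - F 0 :=
        Finset.sum_range_sub F (m+1)
      have step : ∀ k ∈ Finset.range (m+1), F (k+1) - F k
          = (v A - v B) * ((∏ i ∈ Finset.range k, (v A - v i)) *
              (∏ j ∈ Finset.Ico (k+1) (m+1), (v B - v j))) := by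
        intro k hk
        rw [Finset.mem_range] at hk
        rw [hF]
        simp only
        rw [Finset.prod_range_succ, Finset.prod_eq_prod_Ico_succ_bot (by omega : k < m+1)]
        ring
      have hFm : F (m+1) = 0 := by
        rw [hF]
        simp only [Finset.Ico_self, Finset.prod_empty, mul_one]
        exact Finset.prod_eq_zero (i := A) (Finset.mem_range.mpr (by omega)) (by ring)
      have hF0 : F 0 = 0 := by
        rw [hF]
        simp only [Finset.range_zero, Finset.prod_empty, one_mul]
        refine Finset.prod_eq_zero (i := B) ?_ (by ring)
        simp only [Finset.mem_Ico]; omega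
      have key : (v A - v B) * ∑ k ∈ Finset.range (m+1),
          (∏ i ∈ Finset.range k, (v A - v i)) * (∏ j ∈ Finset.Ico (k+1) (m+1), (v B - v j)) = 0 := by
        rw [Finset.mul_sum, ← Finset.sum_congr rfl step, tel, hFm, hF0, sub_zero]
      have hne : v A - v B ≠ 0 := sub_ne_zero_of_ne hv
      exact (mul_eq_zero.mp key).resolve_left hne


/-- Let `q 0, …, q m` be pairwise orthogonal idempotents summing to `1` in an associative
unital ℝ-algebra, `v 0, …, v m` arbitrary reals, and `φ = ∑ A, v A • q A`. Then for every
`ψ`, `∑_{k=0}^{m} (∏_{i<k} (φ − v i·1)) · ψ · (∏_{j>k} (φ − v j·1))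
= ∑_{A=0}^{m} ζ_A • (q A ψ q A)` where `ζ_A = ∏_{i ≠ A} (v A − v i)`; all cross terms
`q A ψ q B` with `A ≠ B` cancel. -/
theorem stmt8 (R : Type*) [Ring R] [Algebra ℝ R] (m : ℕ) (q : ℕ → R) (v : ℕ → ℝ)
    (horth : ∀ A ≤ m, ∀ B ≤ m, A ≠ B → q A * q B = 0)
    (hidem : ∀ A ≤ m, q A * q A = q A)
    (hsum : ∑ A ∈ Finset.range (m + 1), q A = 1)
    (φ : R) (hφ : φ = ∑ A ∈ Finset.range (m + 1), v A • q A)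
    (ψ : R) :
    ∑ k ∈ Finset.range (m + 1),
        ((List.range k).map (fun i => φ - algebraMap ℝ R (v i))).prod * ψ *
          ((List.range' (k + 1) (m - k)).map (fun j => φ - algebraMap ℝ R (v j))).prod
      = ∑ A ∈ Finset.range (m + 1),
          (∏ i ∈ (Finset.range (m + 1)).erase A, (v A - v i)) • (q A * ψ * q A) := by
  set f : ℕ → R := fun i => φ - algebraMap ℝ R (v i) with hf
  have hφq : ∀ A ≤ m, φ * q A = v A • q A := by
    intro A hA
    rw [hφ, Finset.sum_mul, Finset.sum_eq_single A]
    · rw [smul_mul_assoc, hidem A hA]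
    · intro B hB hBA
      rw [smul_mul_assoc, horth B (Nat.lt_succ_iff.mp (Finset.mem_range.mp hB)) A hA hBA,
        smul_zero]
    · intro h; exact absurd (Finset.mem_range.mpr (by omega)) h
  have hqφ : ∀ A ≤ m, q A * φ = v A • q A := by
    intro A hA
    rw [hφ, Finset.mul_sum, Finset.sum_eq_single A]
    · rw [mul_smul_comm, hidem A hA]
    · intro B hB hBA
      rw [mul_smul_comm, horth A hA B (Nat.lt_succ_iff.mp (Finset.mem_range.mp hB)) hBA.symm,
        smul_zero]
    · intro h; exact absurd (Finset.mem_range.mpr (by omega)) h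
  have hfacL : ∀ A ≤ m, ∀ i, f i * q A = (v A - v i) • q A := by
    intro A hA i
    rw [hf]
    simp only
    rw [sub_mul, hφq A hA, Algebra.algebraMap_eq_smul_one, smul_mul_assoc, one_mul, sub_smul]
  have hfacR : ∀ A ≤ m, ∀ i, q A * f i = (v A - v i) • q A := by
    intro A hA i
    rw [hf]
    simp only
    rw [mul_sub, hqφ A hA, Algebra.algebraMap_eq_smul_one, mul_smul_comm, mul_one, sub_smul]
  have hL : ∀ A ≤ m, ∀ k, ((List.range k).map f).prod * q A
      = (∏ i ∈ Finset.range k, (v A - v i)) • q A := by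
    intro A hA k
    induction k with
    | zero => simp
    | succ n ih =>
      rw [List.range_succ, List.map_append, List.prod_append, List.map_cons, List.map_nil,
        List.prod_cons, List.prod_nil, mul_one, mul_assoc, hfacL A hA n, mul_smul_comm, ih,
        smul_smul, Finset.prod_range_succ, mul_comm]
  have hR : ∀ B ≤ m, ∀ n, ∀ s, q B * ((List.range' s n).map f).prod
      = (∏ j ∈ Finset.Ico s (s+n), (v B - v j)) • q B := by
    intro B hB n
    induction n with
    | zero => intro s; simp
    | succ n ih =>
      intro s
      rw [List.range'_succ, List.map_cons, List.prod_cons, ← mul_assoc, hfacR B hB s,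
        smul_mul_assoc, ih (s+1), smul_smul,
        Finset.prod_eq_prod_Ico_succ_bot (by omega : s < s + (n+1))]
      have hbd : s + 1 + n = s + (n + 1) := by omega
      rw [hbd]
  have hterm : ∀ k ∈ Finset.range (m+1),
      ((List.range k).map f).prod * ψ * ((List.range' (k + 1) (m - k)).map f).prod
      = ∑ A ∈ Finset.range (m+1), ∑ B ∈ Finset.range (m+1),
          ((∏ i ∈ Finset.range k, (v A - v i)) *
            (∏ j ∈ Finset.Ico (k+1) (m+1), (v B - v j))) • (q A * ψ * q B) := by
    intro k hk
    rw [Finset.mem_range] at hk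
    have h1 : ψ = (∑ A ∈ Finset.range (m+1), q A) * ψ * (∑ B ∈ Finset.range (m+1), q B) := by
      rw [hsum, one_mul, mul_one]
    conv_lhs => rw [h1]
    rw [Finset.sum_mul, Finset.sum_mul_sum, Finset.mul_sum, Finset.sum_mul]
    refine Finset.sum_congr rfl fun A hA => ?_
    rw [Finset.mul_sum, Finset.sum_mul]
    refine Finset.sum_congr rfl fun B hB => ?_
    rw [Finset.mem_range] at hA hB
    have hA' : A ≤ m := by omega
    have hB' : B ≤ m := by omega
    calc ((List.range k).map f).prod * (q A * ψ * q B) * ((List.range' (k + 1) (m - k)).map f).prod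
        = (((List.range k).map f).prod * q A) * ψ *
            (q B * ((List.range' (k + 1) (m - k)).map f).prod) := by
          simp only [mul_assoc]
      _ = _ := by
          rw [hL A hA' k, hR B hB' (m - k) (k+1), smul_mul_assoc, smul_mul_assoc,
            mul_smul_comm, smul_smul]
          have : k + 1 + (m - k) = m + 1 := by omega
          rw [this, mul_comm]
  rw [Finset.sum_congr rfl hterm, Finset.sum_comm]
  refine Finset.sum_congr rfl fun A hA => ?_
  rw [Finset.mem_range] at hA
  rw [Finset.sum_comm]
  have : ∀ B ∈ Finset.range (m+1), ∑ k ∈ Finset.range (m+1),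
      ((∏ i ∈ Finset.range k, (v A - v i)) *
        (∏ j ∈ Finset.Ico (k+1) (m+1), (v B - v j))) • (q A * ψ * q B)
      = (if A = B then ∏ i ∈ (Finset.range (m+1)).erase A, (v A - v i) else 0) • (q A * ψ * q B) := by
    intro B hB
    rw [Finset.mem_range] at hB
    rw [← Finset.sum_smul, scalar_key m v A B (by omega) (by omega)]
  rw [Finset.sum_congr rfl this]
  simp only [ite_smul, zero_smul, Finset.sum_ite_eq]
  rw [if_pos (Finset.mem_range.mpr hA)]
end

section
/- Let V be a real polynomial of degree m ≥ 2 with leading coefficient b_m ≠ 0, and assume that every real root y of the derivative V' is a simple root, i.e. V''(y) ≠ 0 whenever V'(y) = 0. Then the set of real critical points of V is finite and ∑_{y : V'(y)=0} sgn(V''(y)) = sgn(b_m) if m is even, and = 0 if m is odd. -/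
open Polynomial Filter Set


private lemma sign_mul_pos' (a c : ℝ) (hc : 0 < c) : Real.sign (a * c) = Real.sign a := by
  rcases lt_trichotomy a 0 with h | h | h
  · rw [Real.sign_of_neg h, Real.sign_of_neg (mul_neg_of_neg_of_pos h hc)]
  · simp [h]
  · rw [Real.sign_of_pos h, Real.sign_of_pos (mul_pos h hc)]

private lemma sign_eq_on_no_root (P : Polynomial ℝ) {a b : ℝ} (hab : a ≤ b)
    (h : ∀ t ∈ Set.Icc a b, P.eval t ≠ 0) :
    Real.sign (P.eval a) = Real.sign (P.eval b) := by
  have ha := h a ⟨le_refl a, hab⟩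
  have hb := h b ⟨hab, le_refl b⟩
  have hc : ContinuousOn (fun x => P.eval x) (Set.Icc a b) :=
    (Polynomial.continuous P).continuousOn
  rcases ha.lt_or_gt with ha' | ha' <;> rcases hb.lt_or_gt with hb' | hb'
  · rw [Real.sign_of_neg ha', Real.sign_of_neg hb']
  · exfalso
    obtain ⟨c, hc1, hc2⟩ := intermediate_value_Icc hab hc
      (show (0:ℝ) ∈ Set.Icc (P.eval a) (P.eval b) from ⟨ha'.le, hb'.le⟩)
    exact h c hc1 hc2
  · exfalso
    obtain ⟨c, hc1, hc2⟩ := intermediate_value_Icc' hab hc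
      (show (0:ℝ) ∈ Set.Icc (P.eval b) (P.eval a) from ⟨hb'.le, ha'.le⟩)
    exact h c hc1 hc2
  · rw [Real.sign_of_pos ha', Real.sign_of_pos hb']

private lemma sign_near_root (P : Polynomial ℝ) {r : ℝ} (h0 : P.eval r = 0)
    (h1 : P.derivative.eval r ≠ 0) :
    ∃ δ > 0, (∀ x ∈ Set.Ioo r (r + δ),
        Real.sign (P.eval x) = Real.sign (P.derivative.eval r)) ∧
      ∀ x ∈ Set.Ioo (r - δ) r,
        Real.sign (P.eval x) = -Real.sign (P.derivative.eval r) := by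
  have hd : HasDerivAt (fun x => P.eval x) (P.derivative.eval r) r := P.hasDerivAt r
  rw [hasDerivAt_iff_tendsto_slope] at hd
  have hsgn : ∀ᶠ y in nhds (P.derivative.eval r),
      Real.sign y = Real.sign (P.derivative.eval r) := by
    rcases h1.lt_or_gt with h | h
    · filter_upwards [eventually_lt_nhds h] with y hy
      rw [Real.sign_of_neg hy, Real.sign_of_neg h]
    · filter_upwards [eventually_gt_nhds h] with y hy
      rw [Real.sign_of_pos hy, Real.sign_of_pos h]
  have hev := hd.eventually hsgn
  rw [eventually_nhdsWithin_iff, Metric.eventually_nhds_iff] at hev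
  obtain ⟨δ, hδ, hball⟩ := hev
  have hslope : ∀ x : ℝ, x ≠ r → slope (fun x => P.eval x) r x = P.eval x / (x - r) := by
    intro x hx
    rw [slope_def_field]
    simp [h0]
  refine ⟨δ, hδ, ?_, ?_⟩
  · intro x hx
    have hxr : x ≠ r := ne_of_gt hx.1
    have hdist : dist x r < δ := by
      rw [Real.dist_eq, abs_of_pos (sub_pos.2 hx.1)]
      linarith [hx.2]
    have hq := hball hdist hxr
    rw [hslope x hxr] at hq
    have hx0 : (0:ℝ) < x - r := sub_pos.2 hx.1
    have heq : P.eval x = (P.eval x / (x - r)) * (x - r) :=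
      (div_mul_cancel₀ _ (sub_ne_zero.2 hxr)).symm
    rw [heq, sign_mul_pos' _ _ hx0, hq]
  · intro x hx
    have hxr : x ≠ r := ne_of_lt hx.2
    have hdist : dist x r < δ := by
      rw [Real.dist_eq, abs_of_neg (sub_neg.2 hx.2)]
      linarith [hx.1]
    have hq := hball hdist hxr
    rw [hslope x hxr] at hq
    have hx0 : (0:ℝ) < r - x := sub_pos.2 hx.2
    have heq : P.eval x = -((P.eval x / (x - r)) * (r - x)) := by
      have hne : x - r ≠ 0 := sub_ne_zero.2 hxr
      field_simp
      ring
    rw [heq, Real.sign_neg, sign_mul_pos' _ _ hx0, hq]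


private lemma sign_eventually_atTop (P : Polynomial ℝ) (hdeg : 0 < P.natDegree) :
    ∀ᶠ x in atTop, Real.sign (P.eval x) = Real.sign P.leadingCoeff := by
  have hP : P ≠ 0 := fun h => by simp [h] at hdeg
  have hd : 0 < P.degree := natDegree_pos_iff_degree_pos.mp hdeg
  rcases (leadingCoeff_ne_zero.2 hP).lt_or_gt with h | h
  · have ht := P.tendsto_atBot_of_leadingCoeff_nonpos hd h.le
    filter_upwards [ht.eventually (eventually_lt_atBot 0)] with x hx
    rw [Real.sign_of_neg hx, Real.sign_of_neg h]
  · have ht := P.tendsto_atTop_of_leadingCoeff_nonneg hd h.le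
    filter_upwards [ht.eventually (eventually_gt_atTop 0)] with x hx
    rw [Real.sign_of_pos hx, Real.sign_of_pos h]

private lemma sign_eventually_atBot (P : Polynomial ℝ) (hdeg : 0 < P.natDegree) :
    ∀ᶠ x in atBot, Real.sign (P.eval x)
      = (-1) ^ P.natDegree * Real.sign P.leadingCoeff := by
  set Q := P.comp (-X) with hQdef
  have hnX : (-X : Polynomial ℝ).natDegree = 1 := by simp
  have hQdeg : Q.natDegree = P.natDegree := by
    rw [hQdef, natDegree_comp, hnX, mul_one]
  have hQlead : Q.leadingCoeff = P.leadingCoeff * (-1) ^ P.natDegree := by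
    rw [hQdef, leadingCoeff_comp (by rw [hnX]; norm_num)]
    congr 1
    simp
  have hQev : ∀ x : ℝ, Q.eval x = P.eval (-x) := by
    intro x; rw [hQdef, eval_comp]; simp
  have hT := sign_eventually_atTop Q (by rw [hQdeg]; exact hdeg)
  have hT2 : ∀ᶠ x in atTop, Real.sign (P.eval (-x)) = Real.sign Q.leadingCoeff := by
    filter_upwards [hT] with x hx
    rw [← hQev]; exact hx
  have hmap := tendsto_neg_atBot_atTop.eventually hT2
  have hsq : Real.sign Q.leadingCoeff = (-1) ^ P.natDegree * Real.sign P.leadingCoeff := by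
    rw [hQlead]
    rcases Nat.even_or_odd P.natDegree with he | ho
    · rw [he.neg_one_pow]; ring_nf
    · rw [ho.neg_one_pow]; rw [mul_neg_one, Real.sign_neg]; ring
  filter_upwards [hmap] with x hx
  rw [neg_neg] at hx
  rw [hx, hsq]

private lemma key_sum (P : Polynomial ℝ) (hdeg : 0 < P.natDegree)
    (hs : ∀ y : ℝ, P.eval y = 0 → P.derivative.eval y ≠ 0)
    (hfin : {y : ℝ | P.eval y = 0}.Finite) :
    ∀ (n : ℕ) (b : ℝ), (hfin.toFinset.filter (fun y => y < b)).card = n →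
      P.eval b ≠ 0 →
      ∑ y ∈ hfin.toFinset.filter (fun y => y < b), Real.sign (P.derivative.eval y)
        = (Real.sign (P.eval b) - (-1) ^ P.natDegree * Real.sign P.leadingCoeff) / 2 := by
  intro n
  induction n using Nat.strong_induction_on with
  | _ n IH =>
    intro b hcard hb
    by_cases hne : (hfin.toFinset.filter (fun y => y < b)).Nonempty
    · -- nonempty case
      set F := hfin.toFinset.filter (fun y => y < b) with hFdef
      set r := F.max' hne with hrdef
      have hrF : r ∈ F := F.max'_mem hne
      have hrF' := Finset.mem_filter.1 hrF
      have hr0 : P.eval r = 0 := hfin.mem_toFinset.1 hrF'.1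
      have hrb : r < b := hrF'.2
      have hds := hs r hr0
      obtain ⟨δ, hδ, hright, hleft⟩ := sign_near_root P hr0 hds
      -- the point c to the right of r
      set c := (r + min (r + δ) b) / 2 with hcdef
      have hmin1 : min (r + δ) b ≤ r + δ := min_le_left _ _
      have hmin2 : min (r + δ) b ≤ b := min_le_right _ _
      have hminr : r < min (r + δ) b := lt_min (by linarith) hrb
      have hc1 : r < c := by rw [hcdef]; linarith
      have hc2 : c < r + δ := by rw [hcdef]; linarith
      have hc3 : c < b := by rw [hcdef]; linarith
      have hsc : Real.sign (P.eval c) = Real.sign (P.derivative.eval r) :=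
        hright c ⟨hc1, hc2⟩
      have hnr : ∀ t ∈ Set.Icc c b, P.eval t ≠ 0 := by
        intro t ht h0
        rcases eq_or_lt_of_le ht.2 with rfl | hlt
        · exact hb h0
        · have htF : t ∈ F := Finset.mem_filter.2 ⟨hfin.mem_toFinset.2 h0, hlt⟩
          have := F.le_max' t htF
          have := ht.1
          rw [← hrdef] at *
          linarith
      have hsb : Real.sign (P.eval b) = Real.sign (P.derivative.eval r) :=
        (sign_eq_on_no_root P hc3.le hnr).symm.trans hsc
      -- the set of roots below r
      set T := hfin.toFinset.filter (fun y => y < r) with hTdef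
      have hTF : T = F.erase r := by
        ext y
        simp only [hTdef, hFdef, Finset.mem_filter, Finset.mem_erase]
        constructor
        · rintro ⟨h1, h2⟩
          exact ⟨ne_of_lt h2, h1, h2.trans hrb⟩
        · rintro ⟨hne', h1, h2⟩
          refine ⟨h1, ?_⟩
          have hyF : y ∈ F := Finset.mem_filter.2 ⟨h1, h2⟩
          exact lt_of_le_of_ne (F.le_max' y hyF) hne'
      -- the point c' to the left of r
      have hTlt : ∀ y ∈ T, y < r := fun y hy => (Finset.mem_filter.1 hy).2
      set a0 : ℝ := if hT : T.Nonempty then max (T.max' hT) (r - δ) else r - δ with ha0def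
      have ha0 : a0 < r := by
        rw [ha0def]
        split
        · exact max_lt (hTlt _ (T.max'_mem _)) (by linarith)
        · linarith
      have ha0δ : r - δ ≤ a0 := by
        rw [ha0def]; split
        · exact le_max_right _ _
        · exact le_refl _
      set c' := (a0 + r) / 2 with hc'def
      have hc'1 : a0 < c' := by rw [hc'def]; linarith
      have hc'2 : c' < r := by rw [hc'def]; linarith
      have hc'δ : r - δ < c' := by rw [hc'def]; linarith
      have hsc' : Real.sign (P.eval c') = -Real.sign (P.derivative.eval r) :=
        hleft c' ⟨hc'δ, hc'2⟩
      have hc'ne : P.eval c' ≠ 0 := by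
        intro h0
        rw [h0, Real.sign_zero] at hsc'
        exact hds (Real.sign_eq_zero_iff.1 (neg_eq_zero.1 hsc'.symm))
      have hTc : hfin.toFinset.filter (fun y => y < c') = T := by
        ext y
        simp only [hTdef, Finset.mem_filter]
        constructor
        · rintro ⟨h1, h2⟩
          exact ⟨h1, h2.trans hc'2⟩
        · rintro ⟨h1, h2⟩
          refine ⟨h1, ?_⟩
          have hTne : T.Nonempty := ⟨y, Finset.mem_filter.2 ⟨h1, h2⟩⟩
          have hy1 : y ≤ T.max' hTne := T.le_max' y (Finset.mem_filter.2 ⟨h1, h2⟩)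
          have hy2 : T.max' hTne ≤ a0 := by
            rw [ha0def, dif_pos hTne]
            exact le_max_left _ _
          linarith
      have hcardT : T.card < n := by
        rw [← hcard, hTF]
        exact Finset.card_erase_lt_of_mem hrF
      have hIH := IH T.card hcardT c' (by rw [hTc]) hc'ne
      rw [hTc] at hIH
      have hsum : ∑ y ∈ F, Real.sign (P.derivative.eval y)
          = ∑ y ∈ T, Real.sign (P.derivative.eval y)
            + Real.sign (P.derivative.eval r) := by
        rw [hTF]
        exact (Finset.sum_erase_add F _ hrF).symm
      rw [hsum, hIH, hsc', hsb]
      ring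
    · -- empty case
      rw [Finset.not_nonempty_iff_eq_empty] at hne
      obtain ⟨x, hx1, hx2⟩ :=
        ((sign_eventually_atBot P hdeg).and (eventually_lt_atBot b)).exists
      have hnr : ∀ t ∈ Set.Icc x b, P.eval t ≠ 0 := by
        intro t ht h0
        rcases eq_or_lt_of_le ht.2 with rfl | hlt
        · exact hb h0
        · have : t ∈ hfin.toFinset.filter (fun y => y < b) :=
            Finset.mem_filter.2 ⟨hfin.mem_toFinset.2 h0, hlt⟩
          rw [hne] at this
          exact absurd this (Finset.notMem_empty t)
      have heq := sign_eq_on_no_root P hx2.le hnr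
      rw [hne, Finset.sum_empty, heq.symm.trans hx1]
      ring

/-- Let `V` be a real polynomial of degree `m ≥ 2` with leading coefficient `b_m ≠ 0`
(i.e. `V ≠ 0` and `natDegree V = m`), such that every real root of `V'` is simple
(`V''(y) ≠ 0` whenever `V'(y) = 0`). Then the set of real critical points of `V` is finite
and `∑_{y : V'(y)=0} sgn(V''(y))` equals `sgn(b_m)` if `m` is even and `0` if `m` is odd. -/
theorem stmt9 (V : Polynomial ℝ) (m : ℕ) (hm : 2 ≤ m) (hdeg : V.natDegree = m)
    (hV : V ≠ 0)
    (hsimple : ∀ y : ℝ, (Polynomial.derivative V).eval y = 0 →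
      (Polynomial.derivative (Polynomial.derivative V)).eval y ≠ 0) :
    {y : ℝ | (Polynomial.derivative V).eval y = 0}.Finite ∧
    ∀ hfin : {y : ℝ | (Polynomial.derivative V).eval y = 0}.Finite,
      ∑ y ∈ hfin.toFinset,
          Real.sign ((Polynomial.derivative (Polynomial.derivative V)).eval y)
        = if Even m then Real.sign V.leadingCoeff else 0 := by
  set P := Polynomial.derivative V with hPdef
  have hVdeg : 0 < V.natDegree := by omega
  have hPdegdeg : P.degree = ((m - 1 : ℕ) : WithBot ℕ) := by
    rw [hPdef, degree_derivative_eq V hVdeg, hdeg]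
  have hPdeg : P.natDegree = m - 1 := natDegree_eq_of_degree_eq_some hPdegdeg
  have hPdegpos : 0 < P.natDegree := by omega
  have hP0 : P ≠ 0 := fun h => by simp [h] at hPdegpos
  -- leading coefficient of P
  have hmpos : (0:ℝ) < ((m - 1 : ℕ) : ℝ) + 1 := by positivity
  have hPlead : P.leadingCoeff = V.leadingCoeff * (((m - 1 : ℕ) : ℝ) + 1) := by
    have h1 : P.leadingCoeff = P.coeff (m - 1) := by rw [← hPdeg]; rfl
    have h2 : V.leadingCoeff = V.coeff m := by rw [← hdeg]; rfl
    have h3 : m - 1 + 1 = m := by omega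
    rw [h1, h2, hPdef, coeff_derivative, h3]
  have hsignlead : Real.sign P.leadingCoeff = Real.sign V.leadingCoeff := by
    rw [hPlead, sign_mul_pos' _ _ hmpos]
  have hfin : {y : ℝ | P.eval y = 0}.Finite := by
    have := Polynomial.finite_setOf_isRoot hP0
    exact this
  refine ⟨hfin, ?_⟩
  intro hfin'
  have htf : hfin'.toFinset = hfin.toFinset := by ext y; simp
  rw [htf]
  -- pick b above all roots with the right sign
  have hall : ∀ᶠ b in atTop, ∀ y ∈ {y : ℝ | P.eval y = 0}, y < b :=
    (Filter.eventually_all_finite hfin).2 (fun y _ => eventually_gt_atTop y)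
  obtain ⟨b, hb1, hb2⟩ := ((sign_eventually_atTop P hPdegpos).and hall).exists
  have hFb : hfin.toFinset.filter (fun y => y < b) = hfin.toFinset :=
    Finset.filter_true_of_mem (fun y hy => hb2 y (hfin.mem_toFinset.1 hy))
  have hbne : P.eval b ≠ 0 := by
    intro h
    rw [h, Real.sign_zero] at hb1
    exact (leadingCoeff_ne_zero.2 hP0) (Real.sign_eq_zero_iff.1 hb1.symm)
  have hkey := key_sum P hPdegpos hsimple hfin _ b rfl hbne
  rw [hFb, hb1] at hkey
  rw [hkey, hPdeg]
  rcases Nat.even_or_odd m with he | ho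
  · have hodd : Odd (m - 1) := Nat.Even.sub_odd (by omega) he odd_one
    rw [hodd.neg_one_pow, if_pos he, hsignlead]
    ring
  · have heven : Even (m - 1) := Nat.Odd.sub_odd ho odd_one
    rw [heven.neg_one_pow, if_neg (by simpa using Nat.not_even_iff_odd.mpr ho)]
    ring
end
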